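/- The kernel element of the intersection space satisfies (k₁ ∧ k₂)_x = (1/2) U_∧* ((k₁)_x ⊕ −(k₂)_x) = U_∧* ((k₁)_x ⊕ 0) = U_∧* (0 ⊕ −(k₂)_x), where U_∧ h = h ⊕ (−h) is the isometric embedding of H(k₁)∧H(k₂) into H(k₁) ⊕ H(k₂). -/

import Mathlib

open scoped InnerProductSpace

/-- The intersection space `H(k₁) ∧ H(k₂)`, realized as the subspace of the Hilbert direct sum
`H₁ ⊕₂ H₂` consisting of pairs `(f, g)` representing the same function, i.e. `j₁ f = j₂ g`.
Its inherited norm is the sum-of-squares norm `‖f‖² + ‖g‖²`. -/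
noncomputable def interSub {X H₁ H₂ : Type*}
    [NormedAddCommGroup H₁] [InnerProductSpace ℂ H₁]
    [NormedAddCommGroup H₂] [InnerProductSpace ℂ H₂]
    (j₁ : H₁ →ₗ[ℂ] (X → ℂ)) (j₂ : H₂ →ₗ[ℂ] (X → ℂ)) :
    Submodule ℂ (WithLp 2 (H₁ × H₂)) :=
  LinearMap.ker ((j₁.comp (LinearMap.fst ℂ H₁ H₂) - j₂.comp (LinearMap.snd ℂ H₁ H₂)).comp
    (WithLp.linearEquiv 2 ℂ (H₁ × H₂)).toLinearMap)

/-- The kernel element of the intersection space satisfies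
`(k₁ ∧ k₂)_x = (1/2) U_∧* ((k₁)_x ⊕ −(k₂)_x) = U_∧* ((k₁)_x ⊕ 0) = U_∧* (0 ⊕ −(k₂)_x)`, where
`U_∧ h = h ⊕ (−h)` (i.e. `(f,g) ↦ (f,−g)` on pairs) is the isometric embedding of
`H(k₁) ∧ H(k₂)` into `H(k₁) ⊕₂ H(k₂)`.  Identities for the adjoint `U_∧*` are expressed via
inner products: for every `w`, `⟪U_∧* w, p⟫ = ⟪w, U_∧ p⟫`. -/
theorem rkhs_meet_kernel_element_formulas
    {X H₁ H₂ : Type*}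
    [NormedAddCommGroup H₁] [InnerProductSpace ℂ H₁] [CompleteSpace H₁]
    [NormedAddCommGroup H₂] [InnerProductSpace ℂ H₂] [CompleteSpace H₂]
    (j₁ : H₁ →ₗ[ℂ] (X → ℂ)) (j₂ : H₂ →ₗ[ℂ] (X → ℂ))
    (hj₁ : Function.Injective j₁) (hj₂ : Function.Injective j₂)
    (k₁ : X → H₁) (k₂ : X → H₂)
    (hk₁ : ∀ (f : H₁) (x : X), j₁ f x = ⟪k₁ x, f⟫_ℂ)
    (hk₂ : ∀ (g : H₂) (x : X), j₂ g x = ⟪k₂ x, g⟫_ℂ)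
    (x : X) (K : interSub j₁ j₂)
    (hK : ∀ p : interSub j₁ j₂,
      ⟪K, p⟫_ℂ = j₁ (WithLp.equiv 2 (H₁ × H₂) (p : WithLp 2 (H₁ × H₂))).1 x) :
    ∀ p : interSub j₁ j₂,
      ⟪K, p⟫_ℂ = (1 / 2 : ℂ) *
          ⟪(WithLp.equiv 2 (H₁ × H₂)).symm (k₁ x, -(k₂ x)),
            (WithLp.equiv 2 (H₁ × H₂)).symm
              ((WithLp.equiv 2 (H₁ × H₂) (p : WithLp 2 (H₁ × H₂))).1,
               -(WithLp.equiv 2 (H₁ × H₂) (p : WithLp 2 (H₁ × H₂))).2)⟫_ℂ ∧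
      ⟪K, p⟫_ℂ =
          ⟪(WithLp.equiv 2 (H₁ × H₂)).symm (k₁ x, (0 : H₂)),
            (WithLp.equiv 2 (H₁ × H₂)).symm
              ((WithLp.equiv 2 (H₁ × H₂) (p : WithLp 2 (H₁ × H₂))).1,
               -(WithLp.equiv 2 (H₁ × H₂) (p : WithLp 2 (H₁ × H₂))).2)⟫_ℂ ∧
      ⟪K, p⟫_ℂ =
          ⟪(WithLp.equiv 2 (H₁ × H₂)).symm ((0 : H₁), -(k₂ x)),
            (WithLp.equiv 2 (H₁ × H₂)).symm
              ((WithLp.equiv 2 (H₁ × H₂) (p : WithLp 2 (H₁ × H₂))).1,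
               -(WithLp.equiv 2 (H₁ × H₂) (p : WithLp 2 (H₁ × H₂))).2)⟫_ℂ := by
  intro p
  have hmem := p.2
  simp only [interSub, LinearMap.mem_ker, LinearMap.comp_apply, LinearMap.sub_apply,
    LinearMap.fst_apply, LinearMap.snd_apply, LinearEquiv.coe_coe] at hmem
  have heq : (⟪k₁ x, (WithLp.equiv 2 (H₁ × H₂) (p : WithLp 2 (H₁ × H₂))).1⟫_ℂ : ℂ)
      = ⟪k₂ x, (WithLp.equiv 2 (H₁ × H₂) (p : WithLp 2 (H₁ × H₂))).2⟫_ℂ := by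
    have h := congrFun (sub_eq_zero.mp hmem) x
    simpa [hk₁, hk₂, WithLp.linearEquiv] using h
  have hbase : (⟪K, p⟫_ℂ : ℂ)
      = ⟪k₁ x, (WithLp.equiv 2 (H₁ × H₂) (p : WithLp 2 (H₁ × H₂))).1⟫_ℂ := by
    rw [hK p, hk₁]
  refine ⟨?_, ?_, ?_⟩
  · rw [hbase]
    rw [WithLp.prod_inner_apply]
    simp only [WithLp.equiv_symm_apply, WithLp.toLp_fst, WithLp.toLp_snd, inner_neg_neg]
    rw [← heq]; ring
  · rw [hbase, WithLp.prod_inner_apply]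
    simp
  · rw [hbase, WithLp.prod_inner_apply]
    simp only [WithLp.equiv_symm_apply, WithLp.toLp_fst, WithLp.toLp_snd, inner_neg_neg, inner_zero_left,
      zero_add]
    exact heq
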